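/- For a product state ρ = ρ_m ⊗ ρ_n and the Lie algebra component g = span_ℝ{iP_q ⊗ Π/√χ} with Π a rank-χ projection, the Frobenius norm of the projection of iρ onto g equals χ^{−1/2} tr(Π ρ_n) ‖(ρ_m)₀‖_F, where (ρ_m)₀ = ρ_m − 2^{−m} tr(ρ_m) I is the traceless part of ρ_m. -/

import Mathlib

open Matrix Kronecker
open scoped ComplexOrder

private lemma kron_conjT {α β : Type*} (A : Matrix α α ℂ) (B : Matrix β β ℂ) :
    (A ⊗ₖ B)ᴴ = Aᴴ ⊗ₖ Bᴴ := by
  ext ⟨i, j⟩ ⟨k, l⟩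
  simp [conjTranspose_apply, kroneckerMap_apply, star_mul']

private lemma psd_trace_re_nonneg {k : Type*} [Fintype k] [DecidableEq k]
    {M : Matrix k k ℂ} (hM : M.PosSemidef) : 0 ≤ M.trace.re := by
  have h : ∀ i, 0 ≤ (M i i).re := by
    intro i
    have h2 := hM.dotProduct_mulVec_nonneg (Pi.single i 1)
    have h3 : star (Pi.single i 1) ⬝ᵥ (M *ᵥ Pi.single i 1) = M i i := by
      simp [dotProduct, mulVec, Pi.single_apply, Finset.mul_sum]
    rw [h3] at h2
    exact (Complex.le_def.mp h2).1
  rw [Matrix.trace, Complex.re_sum]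
  exact Finset.sum_nonneg fun i _ => h i

private lemma trace_comb {ι k : Type*} [Fintype ι] [DecidableEq ι] [Fintype k]
    (w : ι → Matrix k k ℂ) (d : ℂ) (c : ι → ℝ)
    (hw : ∀ q q', Matrix.trace ((w q)ᴴ * w q') = if q = q' then d else 0) :
    Matrix.trace ((∑ q, c q • w q)ᴴ * (∑ q, c q • w q)) = (∑ q, c q * c q) • d := by
  rw [Matrix.conjTranspose_sum]
  simp only [Matrix.conjTranspose_smul, star_trivial, Finset.sum_mul, Finset.mul_sum,
    Matrix.smul_mul, _root_.Matrix.mul_smul, Matrix.trace_sum, Matrix.trace_smul, hw,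
    smul_ite, smul_zero]
  rw [Finset.sum_comm]
  simp only [Finset.sum_ite_eq, Finset.mem_univ, if_true, smul_smul, Finset.sum_smul,
    Complex.real_smul]
  exact Finset.sum_congr rfl fun x _ => by push_cast; ring

/-- **Frobenius norm of the Hilbert–Schmidt projection of a product state onto
`g = span_ℝ{iP_q ⊗ Π/√χ}`.** Here `{P_q}` is an orthonormal basis (Hilbert–Schmidt) of
traceless Hermitian `2^m × 2^m` matrices and `Π` an orthogonal projection of rank `χ`.
If `p` is the orthogonal projection of `i(ρ_m ⊗ ρ_n)` onto `g` (characterized by `p ∈ g`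
and the residual being Hilbert–Schmidt orthogonal to `g`), then
`‖p‖_F = χ^{−1/2} tr(Π ρ_n) ‖ρ_m − 2^{−m} I‖_F`, where `ρ_m − 2^{−m} tr(ρ_m) I` is the
traceless part of `ρ_m`. -/
theorem frobenius_norm_hs_projection_product_state
    {m n : ℕ} {ι : Type*} [Fintype ι] [DecidableEq ι]
    (P : ι → Matrix (Fin m → Fin 2) (Fin m → Fin 2) ℂ)
    (hPherm : ∀ q, (P q).IsHermitian) (hPtr : ∀ q, (P q).trace = 0)
    (hPon : ∀ q q', Matrix.trace ((P q)ᴴ * P q') = if q = q' then 1 else 0)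
    (hPspan : ∀ A : Matrix (Fin m → Fin 2) (Fin m → Fin 2) ℂ,
      A.IsHermitian → A.trace = 0 → A ∈ Submodule.span ℝ (Set.range P))
    (Pi : Matrix (Fin n → Fin 2) (Fin n → Fin 2) ℂ)
    (hPiherm : Pi.IsHermitian) (hPiproj : Pi * Pi = Pi)
    (χ : ℕ) (hχ : 0 < χ) (hPirank : Pi.trace = (χ : ℂ))
    (ρm : Matrix (Fin m → Fin 2) (Fin m → Fin 2) ℂ)
    (hρm : ρm.PosSemidef) (hρmtr : ρm.trace = 1)
    (ρn : Matrix (Fin n → Fin 2) (Fin n → Fin 2) ℂ)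
    (hρn : ρn.PosSemidef) (hρntr : ρn.trace = 1)
    (p : Matrix ((Fin m → Fin 2) × (Fin n → Fin 2)) ((Fin m → Fin 2) × (Fin n → Fin 2)) ℂ)
    (hmem : p ∈ Submodule.span ℝ (Set.range fun q => Complex.I • (P q ⊗ₖ Pi)))
    (horth : ∀ x ∈ Submodule.span ℝ (Set.range fun q => Complex.I • (P q ⊗ₖ Pi)),
      (Matrix.trace (xᴴ * (Complex.I • (ρm ⊗ₖ ρn) - p))).re = 0) :
    Real.sqrt ((Matrix.trace (pᴴ * p)).re)
      = (Real.sqrt χ)⁻¹ * (Matrix.trace (Pi * ρn)).re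
          * Real.sqrt ((Matrix.trace
              ((ρm - ((2 : ℂ) ^ m)⁻¹ • 1)ᴴ * (ρm - ((2 : ℂ) ^ m)⁻¹ • 1))).re) := by
  classical
  set v : ι → Matrix ((Fin m → Fin 2) × (Fin n → Fin 2))
      ((Fin m → Fin 2) × (Fin n → Fin 2)) ℂ := fun q => Complex.I • (P q ⊗ₖ Pi) with hv
  set ρm0 : Matrix (Fin m → Fin 2) (Fin m → Fin 2) ℂ := ρm - ((2 : ℂ) ^ m)⁻¹ • 1 with hρm0
  -- cancellation of I scalars
  have hcancel : ∀ (X Y : Matrix ((Fin m → Fin 2) × (Fin n → Fin 2))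
      ((Fin m → Fin 2) × (Fin n → Fin 2)) ℂ),
      (Complex.I • X)ᴴ * (Complex.I • Y) = Xᴴ * Y := by
    intro X Y
    rw [Matrix.conjTranspose_smul, Matrix.smul_mul, _root_.Matrix.mul_smul, smul_smul]
    simp [Complex.star_def, Complex.conj_I]
  -- inner products of the basis
  have hvv : ∀ q q', Matrix.trace ((v q)ᴴ * v q') = if q = q' then (χ : ℂ) else 0 := by
    intro q q'
    rw [hv]
    simp only
    rw [hcancel, kron_conjT, ← mul_kronecker_mul, trace_kronecker, hPon, hPiherm.eq, hPiproj,
      hPirank]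
    split <;> simp
  -- traceless part of ρm
  have htr1 : Matrix.trace (1 : Matrix (Fin m → Fin 2) (Fin m → Fin 2) ℂ) = (2 : ℂ) ^ m := by
    rw [Matrix.trace_one]
    simp [Fintype.card_fun]
  have hρm0herm : ρm0.IsHermitian := by
    rw [hρm0, Matrix.IsHermitian]
    rw [Matrix.conjTranspose_sub, hρm.1.eq, Matrix.conjTranspose_smul, Matrix.conjTranspose_one]
    congr 1
    simp [Complex.star_def, map_inv₀, map_pow]
  have hρm0tr : ρm0.trace = 0 := by
    rw [hρm0, Matrix.trace_sub, Matrix.trace_smul, htr1, hρmtr]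
    have : ((2 : ℂ) ^ m) ≠ 0 := by positivity
    field_simp
    simp [this]
  obtain ⟨a, ha⟩ := (Submodule.mem_span_range_iff_exists_fun ℝ).mp (hPspan ρm0 hρm0herm hρm0tr)
  obtain ⟨c, hc⟩ := (Submodule.mem_span_range_iff_exists_fun ℝ).mp hmem
  -- coefficients of ρm0
  have hPa : ∀ q, Matrix.trace ((P q)ᴴ * ρm0) = (a q : ℂ) := by
    intro q
    rw [← ha, Matrix.mul_sum, Matrix.trace_sum]
    simp only [_root_.Matrix.mul_smul, Matrix.trace_smul, hPon, smul_ite, smul_zero]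
    simp [Complex.real_smul]
  have hPρm : ∀ q, Matrix.trace ((P q)ᴴ * ρm) = (a q : ℂ) := by
    intro q
    have hsplit : ρm = ρm0 + ((2 : ℂ) ^ m)⁻¹ • 1 := by rw [hρm0, sub_add_cancel]
    rw [hsplit, Matrix.mul_add, Matrix.trace_add, hPa, _root_.Matrix.mul_smul, Matrix.mul_one,
      Matrix.trace_smul, (hPherm q).eq, hPtr q]
    simp
  -- orthogonality equations give the coefficients c
  set t : ℝ := (Matrix.trace (Pi * ρn)).re with htdef
  have hcq : ∀ q, c q * χ = a q * t := by
    intro q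
    have hq := horth (v q) (Submodule.subset_span ⟨q, rfl⟩)
    have e1 : Matrix.trace ((v q)ᴴ * (Complex.I • (ρm ⊗ₖ ρn))) = (a q : ℂ) * Matrix.trace (Pi * ρn) := by
      rw [hv]
      simp only
      rw [hcancel, kron_conjT, ← mul_kronecker_mul, trace_kronecker, hPρm, hPiherm.eq]
    have e2 : Matrix.trace ((v q)ᴴ * p) = (c q : ℝ) • (χ : ℂ) := by
      rw [← hc, Matrix.mul_sum, Matrix.trace_sum]
      simp only [_root_.Matrix.mul_smul, Matrix.trace_smul, hvv, smul_ite, smul_zero]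
      simp
    rw [Matrix.mul_sub, Matrix.trace_sub, e1, e2] at hq
    have : (a q : ℝ) * (Matrix.trace (Pi * ρn)).re - c q * χ = 0 := by
      simpa [Complex.sub_re, Complex.mul_re, Complex.smul_re] using hq
    linarith [this]
  -- norms as sums of squares
  have hpnorm : (Matrix.trace (pᴴ * p)).re = (∑ q, c q * c q) * χ := by
    rw [← hc, trace_comb v (χ : ℂ) c hvv]
    simp [Complex.smul_re]
  have hwP : ∀ q q', Matrix.trace ((P q)ᴴ * P q') = if q = q' then (1 : ℂ) else 0 := hPon
  have hρm0norm : (Matrix.trace (ρm0ᴴ * ρm0)).re = (∑ q, a q * a q) := by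
    rw [← ha, trace_comb P 1 a hwP]
    simp [Complex.smul_re]
  -- nonnegativity of t
  have ht0 : 0 ≤ t := by
    have hpsd : (Piᴴ * ρn * Pi).PosSemidef := hρn.conjTranspose_mul_mul_same Pi
    have htr : Matrix.trace (Piᴴ * ρn * Pi) = Matrix.trace (Pi * ρn) := by
      rw [Matrix.trace_mul_comm, ← Matrix.mul_assoc, hPiherm.eq, hPiproj]
    rw [htdef, ← htr]
    exact psd_trace_re_nonneg hpsd
  -- final arithmetic
  set S : ℝ := ∑ q, a q * a q with hSdef
  have hS0 : 0 ≤ S := Finset.sum_nonneg fun q _ => mul_self_nonneg _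
  have hχ' : (0 : ℝ) < χ := by exact_mod_cast hχ
  have hcsum : (∑ q, c q * c q) * χ = S * t ^ 2 / χ := by
    have hce : ∀ q, c q = a q * t / χ := by
      intro q
      field_simp
      linarith [hcq q]
    have hsum : ∑ q, c q * c q = S * (t ^ 2 / (χ : ℝ) ^ 2) := by
      rw [hSdef, Finset.sum_mul]
      refine Finset.sum_congr rfl fun q _ => ?_
      rw [hce q]
      field_simp
    rw [hsum]
    field_simp
  rw [hpnorm, hcsum, hρm0norm]
  have key : Real.sqrt (S * t ^ 2 / χ) = (Real.sqrt χ)⁻¹ * t * Real.sqrt S := by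
    have h1 : S * t ^ 2 / χ = ((Real.sqrt χ)⁻¹ * t * Real.sqrt S) ^ 2 := by
      rw [mul_pow, mul_pow, Real.sq_sqrt hS0, inv_pow, Real.sq_sqrt hχ'.le]
      ring
    rw [h1, Real.sqrt_sq (by positivity)]
  exact key
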